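/- arXiv:1901.10288 — 3 statements merged into one kernel-verified Lean document; each statement's English description precedes it below -/
import Mathlib

section
/- Let I be an ideal of ℝ[x₁,…,xₙ] with finite variety such that I contains a square-free univariate polynomial in each variable xᵢ. Then I is a radical ideal. -/
open MvPolynomial

set_option maxHeartbeats 1000000
set_option synthInstance.maxHeartbeats 400000

/-- Seidenberg's lemma. -/
theorem seidenberg_radical
    {n : ℕ} (I : Ideal (MvPolynomial (Fin n) ℝ))
    (hfin : {z : Fin n → ℂ | ∀ f ∈ I, aeval z f = 0}.Finite)
    (hsf : ∀ i : Fin n, ∃ p : Polynomial ℝ, p ≠ 0 ∧ Squarefree p ∧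
      Polynomial.aeval (X i : MvPolynomial (Fin n) ℝ) p ∈ I) :
    I.IsRadical := by
  classical
  by_cases hI : I = ⊤
  · intro f _; simp [hI]
  haveI : Nontrivial (MvPolynomial (Fin n) ℝ ⧸ I) := Ideal.Quotient.nontrivial_iff.mpr hI
  set π : MvPolynomial (Fin n) ℝ →ₐ[ℝ] MvPolynomial (Fin n) ℝ ⧸ I :=
    Ideal.Quotient.mkₐ ℝ I with hπ
  -- the generators are integral
  have hint : ∀ i : Fin n, IsIntegral ℝ (π (X i)) := by
    intro i
    obtain ⟨p, hp0, _, hpI⟩ := hsf i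
    have halg : IsAlgebraic ℝ (π (X i)) := by
      refine ⟨p, hp0, ?_⟩
      rw [Polynomial.aeval_algHom_apply]
      exact Ideal.Quotient.eq_zero_iff_mem.mpr hpI
    exact halg.isIntegral
  -- the quotient is finite-dimensional over ℝ
  have htop : Algebra.adjoin ℝ (Set.range fun i => π (X i)) = ⊤ := by
    have h1 : (Set.range fun i => π (X i)) = π '' (Set.range X) := by
      rw [← Set.range_comp]; rfl
    rw [h1, ← AlgHom.map_adjoin, MvPolynomial.adjoin_range_X, Algebra.map_top,
      AlgHom.range_eq_top]
    exact Ideal.Quotient.mkₐ_surjective ℝ I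
  have hfd : FiniteDimensional ℝ (MvPolynomial (Fin n) ℝ ⧸ I) := by
    refine ⟨?_⟩
    rw [← Algebra.top_toSubmodule, ← htop]
    exact fg_adjoin_of_finite (Set.finite_range _) (by rintro x ⟨i, rfl⟩; exact hint i)
  -- multiplication operators
  set L : (MvPolynomial (Fin n) ℝ ⧸ I) →ₐ[ℝ]
      Module.End ℝ (MvPolynomial (Fin n) ℝ ⧸ I) :=
    Algebra.lmul ℝ (MvPolynomial (Fin n) ℝ ⧸ I) with hL
  have hcomm : ∀ a b : MvPolynomial (Fin n) ℝ ⧸ I, Commute (L a) (L b) := by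
    intro a b
    show L a * L b = L b * L a
    rw [← map_mul, ← map_mul, mul_comm]
  -- each L (π (X i)) is semisimple
  have hssX : ∀ i : Fin n, (L (π (X i))).IsSemisimple := by
    intro i
    obtain ⟨p, hp0, hsq, hpI⟩ := hsf i
    refine Module.End.isSemisimple_of_squarefree_aeval_eq_zero hsq ?_
    rw [Polynomial.aeval_algHom_apply, Polynomial.aeval_algHom_apply,
      show π ((Polynomial.aeval (X i : MvPolynomial (Fin n) ℝ)) p) = 0 from
        Ideal.Quotient.eq_zero_iff_mem.mpr hpI, map_zero]
  -- every multiplication operator is semisimple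
  have hss : ∀ f : MvPolynomial (Fin n) ℝ, (L (π f)).IsSemisimple := by
    intro f
    induction f using MvPolynomial.induction_on with
    | C r =>
      have h1 : π (C r) = algebraMap ℝ _ r := by simp [hπ]
      rw [h1, AlgHom.commutes, Algebra.algebraMap_eq_smul_one]
      exact Module.End.IsSemisimple_smul r Module.End.isSemisimple_id
    | add p q hp hq =>
      rw [map_add, map_add]
      exact Module.End.IsSemisimple.add_of_commute (hcomm _ _) hp hq
    | mul_X p i hp =>
      rw [map_mul, map_mul]
      exact Module.End.IsSemisimple.mul_of_commute (hcomm _ _) hp (hssX i)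
  -- conclude
  intro f ⟨m, hm⟩
  have hnil : IsNilpotent (π f) := ⟨m, by
    rw [← map_pow]
    exact Ideal.Quotient.eq_zero_iff_mem.mpr hm⟩
  have h0 : L (π f) = 0 :=
    Module.End.eq_zero_of_isNilpotent_isSemisimple (hnil.map L) (hss f)
  have hπf : π f = 0 := by
    have := congrArg (fun g : Module.End ℝ (MvPolynomial (Fin n) ℝ ⧸ I) => g 1) h0
    simpa [hL] using this
  exact Ideal.Quotient.eq_zero_iff_mem.mp hπf
end

section
/- Let I ⊆ ℝ[x₁,…,xₙ] be a radical ideal with finite real variety V(I) ⊆ ℝⁿ, and let f be a polynomial that is nonnegative at every point of V(I). Then there exist polynomials s₁,…,s_d such that f − Σᵢ sᵢ² ∈ I. -/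
open MvPolynomial

noncomputable section Aux

variable {n : ℕ}

private def toC (n : ℕ) : MvPolynomial (Fin n) ℝ →+* MvPolynomial (Fin n) ℂ :=
  MvPolynomial.map (algebraMap ℝ ℂ)

private lemma toC_C (r : ℝ) : toC n (C r) = C (r : ℂ) := by
  simp [toC, MvPolynomial.map_C]

private lemma decompose (p : MvPolynomial (Fin n) ℂ) :
    ∃ a b : MvPolynomial (Fin n) ℝ, p = toC n a + C Complex.I * toC n b := by
  induction p using MvPolynomial.induction_on with
  | C z =>
      refine ⟨C z.re, C z.im, ?_⟩
      rw [toC_C, toC_C, ← map_mul, ← map_add]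
      congr 1
      rw [mul_comm, Complex.re_add_im]
  | add p q hp hq =>
      obtain ⟨a, b, rfl⟩ := hp
      obtain ⟨a', b', rfl⟩ := hq
      refine ⟨a + a', b + b', ?_⟩
      rw [map_add, map_add]; ring
  | mul_X p i hp =>
      obtain ⟨a, b, rfl⟩ := hp
      refine ⟨a * X i, b * X i, ?_⟩
      rw [map_mul, map_mul]
      have : toC n (X i) = X i := by simp [toC]
      rw [this]; ring

private lemma toC_mem_map {I : Ideal (MvPolynomial (Fin n) ℝ)}
    {h : MvPolynomial (Fin n) ℝ} (hmem : toC n h ∈ I.map (toC n)) : h ∈ I := by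
  -- every element of I.map (toC n) decomposes as `toC a + C I * toC b` with `a b ∈ I`
  have key : ∀ x ∈ I.map (toC n),
      ∃ a b : MvPolynomial (Fin n) ℝ, a ∈ I ∧ b ∈ I ∧ x = toC n a + C Complex.I * toC n b := by
    intro x hx
    rw [Ideal.map, Ideal.span] at hx
    refine Submodule.span_induction ?_ ?_ ?_ ?_ hx
    · rintro y ⟨g, hg, rfl⟩
      exact ⟨g, 0, hg, I.zero_mem, by simp⟩
    · exact ⟨0, 0, I.zero_mem, I.zero_mem, by simp⟩
    · rintro x y - - ⟨a, b, ha, hb, rfl⟩ ⟨a', b', ha', hb', rfl⟩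
      refine ⟨a + a', b + b', I.add_mem ha ha', I.add_mem hb hb', ?_⟩
      rw [map_add, map_add]; ring
    · rintro c x - ⟨a, b, ha, hb, rfl⟩
      obtain ⟨ca, cb, rfl⟩ := decompose c
      refine ⟨ca * a - cb * b, ca * b + cb * a,
        I.sub_mem (I.mul_mem_left ca ha) (I.mul_mem_left cb hb),
        I.add_mem (I.mul_mem_left ca hb) (I.mul_mem_left cb ha), ?_⟩
      have hI2 : (C Complex.I : MvPolynomial (Fin n) ℂ) * C Complex.I = C (-1) := by
        rw [← map_mul, Complex.I_mul_I]
      simp only [smul_eq_mul, map_sub, map_add, map_mul]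
      ring_nf
      rw [show (C Complex.I : MvPolynomial (Fin n) ℂ) ^ 2 = C Complex.I * C Complex.I from sq _,
        hI2]
      have : (C (-1 : ℂ) : MvPolynomial (Fin n) ℂ) = -1 := by simp
      rw [this]; ring
  obtain ⟨a, b, ha, _, heq⟩ := key _ hmem
  -- compare real parts of coefficients
  have hcoeff : h = a := by
    ext m
    have := congrArg (fun q => MvPolynomial.coeff m q) heq
    simp only [toC, coeff_map, coeff_add, coeff_C_mul] at this
    have := congrArg Complex.re this
    simpa using this
  rw [hcoeff]; exact ha

end Aux

noncomputable section Main

variable {n : ℕ}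

private lemma aeval_coe (w : Fin n → ℝ) (g : MvPolynomial (Fin n) ℝ) :
    aeval (fun i => (w i : ℂ)) g = ((eval w g : ℝ) : ℂ) := by
  rw [aeval_def]
  have : ((eval w g : ℝ) : ℂ) = (algebraMap ℝ ℂ) (eval₂ (RingHom.id ℝ) w g) := by
    rfl
  rw [this, eval₂_comp_left]
  rfl

private lemma interp (S : Finset (Fin n → ℝ)) (z : Fin n → ℝ) (hz : z ∈ S) :
    ∃ p : MvPolynomial (Fin n) ℝ,
      eval z p = 1 ∧ ∀ w ∈ S, w ≠ z → eval w p = 0 := by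
  classical
  set q : (Fin n → ℝ) → MvPolynomial (Fin n) ℝ := fun w =>
    if h : ∃ i, z i ≠ w i then
      C (z h.choose - w h.choose)⁻¹ * (X h.choose - C (w h.choose)) else 0 with hq
  refine ⟨∏ w ∈ S.erase z, q w, ?_, ?_⟩
  · rw [map_prod]
    refine Finset.prod_eq_one fun w hw => ?_
    have hne : w ≠ z := Finset.ne_of_mem_erase hw
    have h : ∃ i, z i ≠ w i := by
      by_contra hc
      push_neg at hc
      exact hne (funext fun i => (hc i).symm)
    simp only [hq, dif_pos h]
    have hzi : z h.choose - w h.choose ≠ 0 := sub_ne_zero.mpr h.choose_spec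
    simp [inv_mul_cancel₀ hzi]
  · intro w hw hne
    rw [map_prod]
    refine Finset.prod_eq_zero (Finset.mem_erase.mpr ⟨hne, hw⟩) ?_
    have h : ∃ i, z i ≠ w i := by
      by_contra hc
      push_neg at hc
      exact hne.symm (funext fun i => hc i)
    simp [hq, dif_pos h]

end Main


theorem nonneg_on_finite_real_variety_is_sos_mod_radical_ideal
    {n : ℕ} (I : Ideal (MvPolynomial (Fin n) ℝ))
    (hrad : I.IsRadical)
    (hfin : {z : Fin n → ℂ | ∀ g ∈ I, aeval z g = 0}.Finite)
    (hreal : ∀ z : Fin n → ℂ, (∀ g ∈ I, aeval z g = 0) → ∀ i, (z i).im = 0)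
    (f : MvPolynomial (Fin n) ℝ)
    (hf : ∀ z : Fin n → ℝ, (∀ g ∈ I, eval z g = 0) → 0 ≤ eval z f) :
    ∃ (d : ℕ) (s : Fin d → MvPolynomial (Fin n) ℝ),
      f - ∑ i, (s i) ^ 2 ∈ I := by
  classical
  set T : Set (Fin n → ℂ) := {z : Fin n → ℂ | ∀ g ∈ I, aeval z g = 0} with hT
  set ρ : (Fin n → ℂ) → (Fin n → ℝ) := fun z i => (z i).re with hρ
  set S : Finset (Fin n → ℝ) := (hfin.image ρ).toFinset with hS
  -- every point of S is a real zero of I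
  have hSreal : ∀ w ∈ S, ∀ g ∈ I, eval w g = 0 := by
    intro w hw g hg
    rw [hS, Set.Finite.mem_toFinset] at hw
    obtain ⟨z, hz, rfl⟩ := hw
    have hzeq : z = fun i => ((ρ z i : ℝ) : ℂ) := by
      funext i
      exact Complex.ext (by simp [hρ]) (by simpa using hreal z hz i)
    have := hz g hg
    rw [hzeq, aeval_coe] at this
    exact_mod_cast this
  -- interpolation polynomials
  have hP : ∀ w : {w // w ∈ S}, ∃ p : MvPolynomial (Fin n) ℝ,
      eval w.1 p = 1 ∧ ∀ v ∈ S, v ≠ w.1 → eval v p = 0 :=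
    fun w => interp S w.1 w.2
  choose P hP1 hP0 using hP
  set g : MvPolynomial (Fin n) ℝ :=
    ∑ w ∈ S.attach, C (Real.sqrt (eval w.1 f)) * P w with hg
  -- evaluation of g on S
  have hgeval : ∀ v ∈ S, eval v g = Real.sqrt (eval v f) := by
    intro v hv
    rw [hg, map_sum]
    rw [Finset.sum_eq_single_of_mem ⟨v, hv⟩ (Finset.mem_attach _ _)]
    · simp [hP1 ⟨v, hv⟩]
    · intro w _ hwv
      have : v ≠ w.1 := fun h => hwv (by ext; exact h.symm ▸ rfl)
      simp [hP0 w v hv this]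
  -- f - g^2 vanishes on the complex variety
  have hvanish : ∀ z ∈ T, eval z (toC n (f - g ^ 2)) = 0 := by
    intro z hz
    have hzeq : z = fun i => ((ρ z i : ℝ) : ℂ) := by
      funext i
      exact Complex.ext (by simp [hρ]) (by simpa using hreal z hz i)
    have hmemS : ρ z ∈ S := by
      rw [hS, Set.Finite.mem_toFinset]
      exact ⟨z, hz, rfl⟩
    have : eval z (toC n (f - g ^ 2)) = aeval z (f - g ^ 2) := by
      rw [aeval_def, toC, eval_map]
    rw [this, hzeq, aeval_coe]
    have hnn : 0 ≤ eval (ρ z) f := hf (ρ z) (hSreal (ρ z) hmemS)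
    rw [map_sub, map_pow, hgeval (ρ z) hmemS, Real.sq_sqrt hnn]
    simp
  -- zero locus of the complexified ideal is T
  have hZL : MvPolynomial.zeroLocus ℂ (I.map (toC n)) = T := by
    ext z
    rw [mem_zeroLocus_iff]
    change (∀ p ∈ I.map (toC n), eval z p = 0) ↔ _
    constructor
    · intro h g hg
      have := h (toC n g) (Ideal.mem_map_of_mem _ hg)
      rwa [toC, eval_map, ← aeval_def] at this
    · intro hz p hp
      have hle : I.map (toC n) ≤ RingHom.ker (eval z : MvPolynomial (Fin n) ℂ →+* ℂ) := by
        rw [Ideal.map_le_iff_le_comap]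
        intro g hg
        rw [Ideal.mem_comap, RingHom.mem_ker, toC, eval_map, ← aeval_def]
        exact hz g hg
      exact hle hp
  -- Nullstellensatz
  have hrad' : toC n (f - g ^ 2) ∈ (I.map (toC n)).radical := by
    rw [← vanishingIdeal_zeroLocus_eq_radical (K := ℂ), mem_vanishingIdeal_iff]
    intro z hzl
    change eval z _ = 0
    exact hvanish z (hZL ▸ hzl)
  obtain ⟨m, hm⟩ := hrad'
  rw [← map_pow] at hm
  have hpow : (f - g ^ 2) ^ m ∈ I := toC_mem_map hm
  have hfg : f - g ^ 2 ∈ I := hrad ⟨m, hpow⟩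
  exact ⟨1, fun _ => g, by simpa using hfg⟩
end

section
/- Let I be a radical ideal of ℝ[x₁,…,xₙ] with finite real variety. If f and g are polynomials that agree at every point of V(I), then f − g ∈ I. -/
open MvPolynomial

noncomputable def rePoly {σ : Type*} (p : MvPolynomial σ ℂ) : MvPolynomial σ ℝ :=
  ∑ m ∈ p.support, monomial m (p.coeff m).re

noncomputable def imPoly {σ : Type*} (p : MvPolynomial σ ℂ) : MvPolynomial σ ℝ :=
  ∑ m ∈ p.support, monomial m (p.coeff m).im

lemma coeff_rePoly {σ : Type*} (p : MvPolynomial σ ℂ) (m : σ →₀ ℕ) :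
    (rePoly p).coeff m = (p.coeff m).re := by
  classical
  rw [rePoly, coeff_sum, Finset.sum_eq_single m]
  · simp
  · intro b _ hb; simp [coeff_monomial, hb]
  · intro h; simp [notMem_support_iff.mp h]

lemma coeff_imPoly {σ : Type*} (p : MvPolynomial σ ℂ) (m : σ →₀ ℕ) :
    (imPoly p).coeff m = (p.coeff m).im := by
  classical
  rw [imPoly, coeff_sum, Finset.sum_eq_single m]
  · simp
  · intro b _ hb; simp [coeff_monomial, hb]
  · intro h; simp [notMem_support_iff.mp h]

lemma decompPoly {σ : Type*} (p : MvPolynomial σ ℂ) :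
    p = map (algebraMap ℝ ℂ) (rePoly p) +
        C Complex.I * map (algebraMap ℝ ℂ) (imPoly p) := by
  apply MvPolynomial.ext
  intro m
  simp only [coeff_add, coeff_map, coeff_C_mul, coeff_rePoly, coeff_imPoly]
  apply Complex.ext <;> simp

lemma rePoly_map {σ : Type*} (q : MvPolynomial σ ℝ) :
    rePoly (map (algebraMap ℝ ℂ) q) = q := by
  apply MvPolynomial.ext
  intro m
  simp [coeff_rePoly, coeff_map]

lemma rePoly_add {σ : Type*} (p q : MvPolynomial σ ℂ) :
    rePoly (p + q) = rePoly p + rePoly q := by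
  apply MvPolynomial.ext; intro m; simp [coeff_rePoly, coeff_add]

lemma imPoly_add {σ : Type*} (p q : MvPolynomial σ ℂ) :
    imPoly (p + q) = imPoly p + imPoly q := by
  apply MvPolynomial.ext; intro m; simp [coeff_imPoly, coeff_add]

lemma rePoly_mul_map {σ : Type*} (r : MvPolynomial σ ℂ) (a : MvPolynomial σ ℝ) :
    rePoly (r * map (algebraMap ℝ ℂ) a) = rePoly r * a := by
  classical
  apply MvPolynomial.ext
  intro m
  rw [coeff_rePoly, coeff_mul, coeff_mul, Complex.re_sum]
  refine Finset.sum_congr rfl fun x _ => ?_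
  simp [coeff_map, coeff_rePoly, Complex.mul_re]

lemma imPoly_mul_map {σ : Type*} (r : MvPolynomial σ ℂ) (a : MvPolynomial σ ℝ) :
    imPoly (r * map (algebraMap ℝ ℂ) a) = imPoly r * a := by
  classical
  apply MvPolynomial.ext
  intro m
  rw [coeff_imPoly, coeff_mul, coeff_mul, Complex.im_sum]
  refine Finset.sum_congr rfl fun x _ => ?_
  simp [coeff_map, coeff_imPoly, Complex.mul_im]

lemma contract_mem {σ : Type*} (I : Ideal (MvPolynomial σ ℝ)) (x : MvPolynomial σ ℂ)
    (hx : x ∈ I.map (map (algebraMap ℝ ℂ) : MvPolynomial σ ℝ →+* MvPolynomial σ ℂ)) :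
    rePoly x ∈ I ∧ imPoly x ∈ I := by
  rw [Ideal.map] at hx
  refine Submodule.span_induction ?_ ?_ ?_ ?_ hx
  · rintro y ⟨q, hq, rfl⟩
    constructor
    · rw [rePoly_map]; exact hq
    · have : imPoly (map (algebraMap ℝ ℂ) q) = 0 := by
        apply MvPolynomial.ext; intro m; simp [coeff_imPoly, coeff_map]
      rw [this]; exact I.zero_mem
  · constructor <;>
      · have : (rePoly (0 : MvPolynomial σ ℂ) = 0) ∧ imPoly (0 : MvPolynomial σ ℂ) = 0 := by
          constructor <;> (apply MvPolynomial.ext; intro m; simp [coeff_rePoly, coeff_imPoly])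
        first
          | (rw [this.1]; exact I.zero_mem)
          | (rw [this.2]; exact I.zero_mem)
  · rintro x y _ _ ⟨hx1, hx2⟩ ⟨hy1, hy2⟩
    rw [rePoly_add, imPoly_add]
    exact ⟨I.add_mem hx1 hy1, I.add_mem hx2 hy2⟩
  · rintro r x _ ⟨hx1, hx2⟩
    have key : r * x = r * map (algebraMap ℝ ℂ) (rePoly x) +
        (C Complex.I * r) * map (algebraMap ℝ ℂ) (imPoly x) := by
      conv_lhs => rw [decompPoly x]
      ring
    rw [smul_eq_mul, key, rePoly_add, imPoly_add, rePoly_mul_map, rePoly_mul_map,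
      imPoly_mul_map, imPoly_mul_map]
    exact ⟨I.add_mem (I.mul_mem_left _ hx1) (I.mul_mem_left _ hx2),
      I.add_mem (I.mul_mem_left _ hx1) (I.mul_mem_left _ hx2)⟩

lemma eval_map_ofReal {σ : Type*} (p : MvPolynomial σ ℝ) (w : σ → ℝ) :
    eval (fun i => ((w i : ℝ) : ℂ)) (map (algebraMap ℝ ℂ) p)
      = ((eval w p : ℝ) : ℂ) := by
  rw [eval_map]
  have := MvPolynomial.eval₂_comp_left (algebraMap ℝ ℂ) (RingHom.id ℝ) w p
  simp only [RingHom.comp_id, eval₂_id] at this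
  simpa [Function.comp_def] using this.symm

theorem eq_on_finite_real_variety_sub_mem_radical_ideal
    {n : ℕ} (I : Ideal (MvPolynomial (Fin n) ℝ))
    (hrad : I.IsRadical)
    (hfin : {z : Fin n → ℂ | ∀ g ∈ I, aeval z g = 0}.Finite)
    (hreal : ∀ z : Fin n → ℂ, (∀ g ∈ I, aeval z g = 0) → ∀ i, (z i).im = 0)
    (f g : MvPolynomial (Fin n) ℝ)
    (hfg : ∀ z : Fin n → ℝ, (∀ p ∈ I, eval z p = 0) → eval z f = eval z g) :
    f - g ∈ I := by
  set φ : MvPolynomial (Fin n) ℝ →+* MvPolynomial (Fin n) ℂ :=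
    (map (algebraMap ℝ ℂ) : MvPolynomial (Fin n) ℝ →+* MvPolynomial (Fin n) ℂ) with hφ
  set J : Ideal (MvPolynomial (Fin n) ℂ) := I.map φ with hJ
  have hvan : φ (f - g) ∈ vanishingIdeal ℂ (zeroLocus ℂ J) := by
    intro z hz
    have hz' : ∀ q ∈ I, aeval z q = 0 := by
      intro q hq
      have h0 : eval z (φ q) = 0 := hz (φ q) (Ideal.mem_map_of_mem φ hq)
      rwa [hφ, eval_map, ← aeval_def] at h0
    have him := hreal z hz'
    set w : Fin n → ℝ := fun i => (z i).re with hw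
    have hzw : z = fun i => ((w i : ℝ) : ℂ) := by
      funext i
      apply Complex.ext
      · rfl
      · simp [hw, him i]
    have hwI : ∀ p ∈ I, eval w p = 0 := by
      intro p hp
      have h0 : aeval z p = 0 := hz' p hp
      rw [hzw, aeval_def, ← eval_map, eval_map_ofReal] at h0
      exact_mod_cast h0
    have := hfg w hwI
    change eval z (φ (f - g)) = 0
    rw [hφ, hzw, eval_map_ofReal]
    rw [show eval w (f - g) = 0 by rw [map_sub, this, sub_self]]
    simp
  have hmem : φ (f - g) ∈ J.radical := by
    rw [← vanishingIdeal_zeroLocus_eq_radical (K := ℂ)]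
    exact hvan
  obtain ⟨k, hk⟩ := hmem
  have hk' : φ ((f - g) ^ k) ∈ J := by rw [map_pow]; exact hk
  have hcontr := (contract_mem I _ hk').1
  rw [hφ, rePoly_map] at hcontr
  exact hrad ⟨k, hcontr⟩
end
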